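/- For any Z ∈ ℝ^{d×N} with unit-norm columns partitioned into two blocks Z₁, Z₂ and a > 0, log det(I + a·ZᵀZ) ≤ log det(I + a·Z₁ᵀZ₁) + log det(I + a·Z₂ᵀZ₂), with equality if and only if the column spaces of Z̃₁ and Z̃₂ are orthogonal, where Z̃ satisfies Z̃ᵀZ̃ = I + a·ZᵀZ with the compatible block structure. -/

import Mathlib

open Matrix

section Helpers
variable {n k : Type*} [Fintype n] [Fintype k] [DecidableEq n]

set_option linter.unusedSectionVars false

lemma psd_smul {M : Matrix n n ℝ} (hM : M.PosSemidef) {a : ℝ} (ha : 0 ≤ a) :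
    (a • M).PosSemidef := by
  refine .of_dotProduct_mulVec_nonneg ?_ fun x => ?_
  · unfold Matrix.IsHermitian
    rw [conjTranspose_smul, hM.1]
    simp
  · rw [smul_mulVec, dotProduct_smul, smul_eq_mul]
    exact mul_nonneg ha (hM.dotProduct_mulVec_nonneg x)

lemma quad_zero {M : Matrix n n ℝ} (hM : M.PosDef) (X : Matrix n k ℝ)
    (h : Xᵀ * M * X = 0) : X = 0 := by
  ext i j
  by_contra hij
  have hx : (fun i => X i j) ≠ 0 := fun h0 => hij (by simpa using congrFun h0 i)
  have hpos := hM.dotProduct_mulVec_pos hx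
  have hq : (star (fun i => X i j)) ⬝ᵥ M *ᵥ (fun i => X i j) = (Xᵀ * M * X) j j := by
    simp only [star_trivial, dotProduct, mulVec, mul_apply, transpose_apply,
      Finset.mul_sum, Finset.sum_mul]
    have hsym : ∀ p q, M p q = M q p := fun p q => by
      have := congrFun (congrFun hM.1 p) q
      simpa using this.symm
    rw [Finset.sum_comm]
    refine Finset.sum_congr rfl fun y _ => Finset.sum_congr rfl fun x _ => by ring
  rw [hq, h] at hpos
  simp at hpos

lemma det_one_add_psd {R : Matrix n n ℝ} (hR : R.PosSemidef) :
    1 ≤ det (1 + R) ∧ (det (1 + R) = 1 ↔ R = 0) := by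
  have hH := hR.1
  have hU := (Matrix.mem_unitaryGroup_iff).mp (hH.eigenvectorUnitary).2
  set U : Matrix n n ℝ := (hH.eigenvectorUnitary : Matrix n n ℝ) with hUdef
  have hspec := hH.spectral_theorem
  have hcoe : (RCLike.ofReal ∘ hH.eigenvalues : n → ℝ) = hH.eigenvalues := by
    funext i; simp [RCLike.ofReal]
  rw [hcoe, Unitary.conjStarAlgAut_apply] at hspec
  have hdiag : (1 : Matrix n n ℝ) + diagonal hH.eigenvalues
      = diagonal (fun i => 1 + hH.eigenvalues i) := by
    ext i j
    by_cases hij : i = j <;> simp [diagonal, hij, one_apply]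
  have hdec : 1 + R = U * (1 + diagonal hH.eigenvalues) * (star U) := by
    rw [Matrix.mul_add, Matrix.add_mul, Matrix.mul_one, hU, ← hspec]
  have hdet : det (1 + R) = ∏ i, (1 + hH.eigenvalues i) := by
    rw [hdec, det_mul_right_comm, hU, one_mul, hdiag, det_diagonal]
  have hnn : ∀ i, (1:ℝ) ≤ 1 + hH.eigenvalues i := fun i => by
    have := hR.eigenvalues_nonneg i
    linarith
  have hone : ∀ (s : Finset n), (1:ℝ) ≤ ∏ i ∈ s, (1 + hH.eigenvalues i) := by
    intro s
    calc (1:ℝ) = ∏ _i ∈ s, 1 := by simp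
      _ ≤ ∏ i ∈ s, (1 + hH.eigenvalues i) :=
        Finset.prod_le_prod (fun i _ => zero_le_one) (fun i _ => hnn i)
  constructor
  · rw [hdet]; exact hone Finset.univ
  · constructor
    · intro h1
      have hall : ∀ i, hH.eigenvalues i = 0 := by
        intro i
        have hsplit := Finset.mul_prod_erase Finset.univ
          (fun i => 1 + hH.eigenvalues i) (Finset.mem_univ i)
        have h2 : (1:ℝ) ≤ ∏ j ∈ Finset.univ.erase i, (1 + hH.eigenvalues j) := hone _
        have h3 : ∏ i : n, (1 + hH.eigenvalues i) = 1 := by rw [← hdet, h1]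
        have h4 : (1 + hH.eigenvalues i) * ∏ j ∈ Finset.univ.erase i,
            (1 + hH.eigenvalues j) = 1 := by rw [hsplit, h3]
        have h5 : (1 + hH.eigenvalues i) * 1 ≤ (1 + hH.eigenvalues i) *
            ∏ j ∈ Finset.univ.erase i, (1 + hH.eigenvalues j) :=
          mul_le_mul_of_nonneg_left h2 (by linarith [hnn i])
        have h6 := hR.eigenvalues_nonneg i
        rw [h4] at h5
        linarith
      have hd0 : diagonal hH.eigenvalues = 0 := by
        rw [show hH.eigenvalues = fun _ => (0:ℝ) from funext hall]; simp
      rw [hspec, hd0]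
      simp
    · intro h; rw [h]; simp
end Helpers

section Key
variable {n : Type*} [Fintype n] [DecidableEq n]

lemma det_key {P S : Matrix n n ℝ} (hP : P.PosDef) (hS : S.PosSemidef) :
    det P ≤ det (P + S) ∧ (det (P + S) = det P ↔ S = 0) := by
  obtain ⟨C, hC⟩ : ∃ C : Matrix n n ℝ, S = Cᴴ * C := by
    open scoped MatrixOrder in exact CStarAlgebra.nonneg_iff_eq_star_mul_self.mp hS.nonneg
  have hPdet : (0:ℝ) < det P := hP.det_pos
  have hPinv : P * P⁻¹ = 1 := Matrix.mul_nonsing_inv P hPdet.ne'.isUnit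
  have hfact : P + S = P * (1 + (P⁻¹ * Cᴴ) * C) := by
    rw [Matrix.mul_add, Matrix.mul_one, hC]
    congr 1
    rw [← Matrix.mul_assoc, ← Matrix.mul_assoc, hPinv, Matrix.one_mul]
  have hR : (C * P⁻¹ * Cᴴ).PosSemidef := hP.inv.posSemidef.mul_mul_conjTranspose_same C
  have hdet1 : det (P + S) = det P * det (1 + C * P⁻¹ * Cᴴ) := by
    rw [hfact, det_mul, det_one_add_mul_comm, Matrix.mul_assoc]
  obtain ⟨hge, heq⟩ := det_one_add_psd hR
  constructor
  · calc det P = det P * 1 := by ring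
      _ ≤ det P * det (1 + C * P⁻¹ * Cᴴ) := by
        exact mul_le_mul_of_nonneg_left hge hPdet.le
      _ = det (P + S) := hdet1.symm
  · constructor
    · intro h
      have ht : det (1 + C * P⁻¹ * Cᴴ) = 1 := by
        have hmul : det P * det (1 + C * P⁻¹ * Cᴴ) = det P * 1 := by
          rw [mul_one, ← hdet1, h]
        exact mul_left_cancel₀ hPdet.ne' hmul
      have hR0 : C * P⁻¹ * Cᴴ = 0 := heq.mp ht
      have hC0 : Cᴴ = 0 := by
        apply quad_zero hP.inv Cᴴ
        rw [conjTranspose_eq_transpose_of_trivial] at hR0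
        rw [show (Cᴴ)ᵀ = C from by
          rw [conjTranspose_eq_transpose_of_trivial, transpose_transpose]]
        rw [conjTranspose_eq_transpose_of_trivial]
        exact hR0
      rw [hC, hC0, Matrix.zero_mul]
    · intro h
      rw [h, add_zero]
end Key

lemma psd_posdef {n : Type*} [Fintype n] [DecidableEq n]
    {M : Matrix n n ℝ} (hM : M.PosSemidef) (h : M.det ≠ 0) : M.PosDef := by
  refine .of_dotProduct_mulVec_pos hM.1 fun x hx => ?_
  rcases (hM.dotProduct_mulVec_nonneg x).lt_or_eq with h' | h'
  · exact h'
  · exfalso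
    have h0 : M *ᵥ x = 0 := (hM.dotProduct_mulVec_zero_iff x).mp h'.symm
    have hinj : Function.Injective (M.mulVec) :=
      Matrix.mulVec_injective_iff_isUnit.mpr
        ((Matrix.isUnit_iff_isUnit_det M).mpr (isUnit_iff_ne_zero.mpr h))
    exact hx (hinj (by rw [h0, Matrix.mulVec_zero]))

/-- For `Z = [Z₁, Z₂]` with unit-norm columns and `a > 0`,
`log det(I + a·ZᵀZ) ≤ log det(I + a·Z₁ᵀZ₁) + log det(I + a·Z₂ᵀZ₂)`, with equality iff the
column spaces of the corresponding blocks `Z̃ = [W₁, W₂]` (where `Z̃ᵀZ̃ = I + a·ZᵀZ`) are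
orthogonal, i.e. `W₁ᵀ·W₂ = 0`. -/
theorem log_det_subadditive_blocks (d e N₁ N₂ : ℕ)
    (Z₁ : Matrix (Fin d) (Fin N₁) ℝ) (Z₂ : Matrix (Fin d) (Fin N₂) ℝ)
    (a : ℝ) (ha : 0 < a)
    (hunit₁ : ∀ j : Fin N₁, ∑ i : Fin d, (Z₁ i j) ^ 2 = 1)
    (hunit₂ : ∀ j : Fin N₂, ∑ i : Fin d, (Z₂ i j) ^ 2 = 1)
    (W₁ : Matrix (Fin e) (Fin N₁) ℝ) (W₂ : Matrix (Fin e) (Fin N₂) ℝ)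
    (hW : (Matrix.fromCols W₁ W₂)ᵀ * Matrix.fromCols W₁ W₂ =
      1 + a • ((Matrix.fromCols Z₁ Z₂)ᵀ * Matrix.fromCols Z₁ Z₂)) :
    Real.log (Matrix.det
        (1 + a • ((Matrix.fromCols Z₁ Z₂)ᵀ * Matrix.fromCols Z₁ Z₂))) ≤
      Real.log (Matrix.det (1 + a • (Z₁ᵀ * Z₁))) +
        Real.log (Matrix.det (1 + a • (Z₂ᵀ * Z₂))) ∧
    (Real.log (Matrix.det
        (1 + a • ((Matrix.fromCols Z₁ Z₂)ᵀ * Matrix.fromCols Z₁ Z₂))) =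
      Real.log (Matrix.det (1 + a • (Z₁ᵀ * Z₁))) +
        Real.log (Matrix.det (1 + a • (Z₂ᵀ * Z₂))) ↔ W₁ᵀ * W₂ = 0) := by
  set A := 1 + a • (Z₁ᵀ * Z₁) with hAdef
  set B := a • (Z₁ᵀ * Z₂) with hBdef
  set D := 1 + a • (Z₂ᵀ * Z₂) with hDdef
  have hBt : Bᵀ = a • (Z₂ᵀ * Z₁) := by
    rw [hBdef, transpose_smul, transpose_mul, transpose_transpose]
  -- block decomposition
  have hblock : 1 + a • ((Matrix.fromCols Z₁ Z₂)ᵀ * Matrix.fromCols Z₁ Z₂) =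
      fromBlocks A B Bᵀ D := by
    rw [transpose_fromCols, fromRows_mul_fromCols, Matrix.fromBlocks_smul,
      ← fromBlocks_one, fromBlocks_add, hBt]
    simp [hAdef, hBdef, hDdef]
  -- positivity facts
  have hpsd1 : (Z₁ᵀ * Z₁).PosSemidef := by
    have := Matrix.posSemidef_conjTranspose_mul_self Z₁
    rwa [conjTranspose_eq_transpose_of_trivial] at this
  have hpsd2 : (Z₂ᵀ * Z₂).PosSemidef := by
    have := Matrix.posSemidef_conjTranspose_mul_self Z₂
    rwa [conjTranspose_eq_transpose_of_trivial] at this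
  have hpsdZ : (((Matrix.fromCols Z₁ Z₂)ᵀ * Matrix.fromCols Z₁ Z₂)).PosSemidef := by
    have := Matrix.posSemidef_conjTranspose_mul_self (Matrix.fromCols Z₁ Z₂)
    rwa [conjTranspose_eq_transpose_of_trivial] at this
  have hA : A.PosDef := Matrix.PosDef.one.add_posSemidef (psd_smul hpsd1 ha.le)
  have hD : D.PosDef := Matrix.PosDef.one.add_posSemidef (psd_smul hpsd2 ha.le)
  have hM : (1 + a • ((Matrix.fromCols Z₁ Z₂)ᵀ * Matrix.fromCols Z₁ Z₂)).PosDef :=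
    Matrix.PosDef.one.add_posSemidef (psd_smul hpsdZ ha.le)
  haveI : Invertible A := A.invertibleOfIsUnitDet hA.det_pos.ne'.isUnit
  have hBH : Bᴴ = Bᵀ := conjTranspose_eq_transpose_of_trivial B
  set S := Bᵀ * A⁻¹ * B with hSdef
  have hS : S.PosSemidef := by
    rw [hSdef, ← hBH]
    exact hA.inv.posSemidef.conjTranspose_mul_mul_same B
  have hdetM : det (fromBlocks A B Bᵀ D) = det A * det (D - S) := by
    rw [det_fromBlocks₁₁, invOf_eq_nonsing_inv]
  -- P := D - S is PosDef
  have hMpos : 0 < det (fromBlocks A B Bᵀ D) := by rw [← hblock]; exact hM.det_pos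
  have hPpos : 0 < det (D - S) := by
    rw [hdetM] at hMpos
    rcases mul_pos_iff.mp hMpos with ⟨_, h⟩ | ⟨h, _⟩
    · exact h
    · linarith [hA.det_pos]
  have hPsd : (D - S).PosSemidef := by
    have hMsd := hM.posSemidef
    rw [hblock] at hMsd
    rw [← hBH] at hMsd
    rw [hSdef, ← hBH]
    exact (Matrix.PosDef.fromBlocks₁₁ B D hA).mp hMsd
  have hPpd : (D - S).PosDef := psd_posdef hPsd hPpos.ne'
  obtain ⟨hle, hiff⟩ := det_key hPpd hS
  rw [sub_add_cancel] at hle hiff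
  -- S = 0 ↔ B = 0
  have hSB : S = 0 ↔ B = 0 := by
    constructor
    · intro h; exact quad_zero hA.inv B h
    · intro h; rw [hSdef, h]; simp
  -- W₁ᵀ * W₂ = B
  have hWB : W₁ᵀ * W₂ = B := by
    have h' := hW
    rw [transpose_fromCols, fromRows_mul_fromCols, hblock] at h'
    have := congrArg Matrix.toBlocks₁₂ h'
    simpa [Matrix.toBlocks_fromBlocks₁₂] using this
  -- assemble
  rw [hblock, hdetM, Real.log_mul hA.det_pos.ne' hPpos.ne']
  constructor
  · exact add_le_add_right (Real.log_le_log hPpos hle) _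
  · rw [add_right_inj]
    constructor
    · intro h
      have hdet : det (D - S) = det D :=
        Real.log_injOn_pos (Set.mem_Ioi.mpr hPpos) (Set.mem_Ioi.mpr hD.det_pos) h
      rw [hWB]
      exact hSB.mp (hiff.mp hdet.symm)
    · intro h
      have hB0 : B = 0 := by rw [← hWB]; exact h
      have : det D = det (D - S) := hiff.mpr (hSB.mpr hB0)
      rw [this]
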